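/- Let d ≥ 1 and i < n be integers. Let Γ be a subset of (i..n] × [0..d] whose points are pairwise incomparable with respect to the componentwise strict order <̇ on ℤ². Then there exists a multiset I of total size at most d with entries in the integer interval [i..n) such that Γ is contained in the set of boundary points of Σ^{(d)}_{i,n}(I) := {(t,h) ∈ ℤ² : i < t ≤ n and 0 ≤ h ≤ d − |I|^{(−∞..t−1]}}, where |I|^{(−∞..t−1]} counts the elements of I (with multiplicity) that are ≤ t−1. -/

import Mathlib

private lemma my_filter_bind {α β : Type*} (s : Multiset α) (f : α → Multiset β)
    (p : β → Prop) [DecidablePred p] :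
    (s.bind f).filter p = s.bind (fun a => (f a).filter p) := by
  induction s using Multiset.induction with
  | empty => simp
  | cons a s ih => simp [Multiset.cons_bind, Multiset.filter_add, ih]

/-- Lemma: any subset `Γ` of `(i..n] × [0..d]` with pairwise incomparable
points (componentwise strict order) is contained in the boundary of
`Σ^{(d)}_{i,n}(I)` for some multiset `I` of size at most `d` with entries in
`[i..n)`. -/
theorem stmt_10 (d : ℕ) (hd : 1 ≤ d) (i n : ℤ) (hin : i < n)
    (Γ : Set (ℤ × ℤ))
    (hΓ : Γ ⊆ {p : ℤ × ℤ | i < p.1 ∧ p.1 ≤ n ∧ 0 ≤ p.2 ∧ p.2 ≤ (d : ℤ)})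
    (hincomp : ∀ x ∈ Γ, ∀ y ∈ Γ, ¬(x.1 < y.1 ∧ x.2 < y.2)) :
    ∃ I : Multiset ℤ, Multiset.card I ≤ d ∧ (∀ x ∈ I, i ≤ x ∧ x < n) ∧
      Γ ⊆ {p : ℤ × ℤ |
        (i < p.1 ∧ p.1 ≤ n ∧ 0 ≤ p.2 ∧
          p.2 ≤ (d : ℤ) - (Multiset.card (I.filter (fun x => x ≤ p.1 - 1)) : ℤ)) ∧
        ¬∃ q : ℤ × ℤ,
          (i < q.1 ∧ q.1 ≤ n ∧ 0 ≤ q.2 ∧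
            q.2 ≤ (d : ℤ) - (Multiset.card (I.filter (fun x => x ≤ q.1 - 1)) : ℤ)) ∧
          p.1 < q.1 ∧ p.2 < q.2} := by
  classical
  set G : Finset (ℤ × ℤ) :=
    ((Finset.Ioc i n) ×ˢ (Finset.Icc (0:ℤ) (d:ℤ))).filter (fun p => p ∈ Γ) with hG
  have hGmem : ∀ p, p ∈ G ↔ p ∈ Γ := by
    intro p
    simp only [hG, Finset.mem_filter, Finset.mem_product, Finset.mem_Ioc, Finset.mem_Icc]
    constructor
    · tauto
    · intro hp
      exact ⟨⟨⟨(hΓ hp).1, (hΓ hp).2.1⟩, (hΓ hp).2.2.1, (hΓ hp).2.2.2⟩, hp⟩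
  set c : ℤ → ℕ :=
    fun t => ((G.filter (fun p => p.1 ≤ t ∧ p.1 < n)).sup (fun p => (d - p.2).toNat)) with hc
  have hcmono : ∀ s t : ℤ, s ≤ t → c s ≤ c t := by
    intro s t hst
    apply Finset.sup_mono
    intro p hp
    rw [Finset.mem_filter] at hp ⊢
    exact ⟨hp.1, le_trans hp.2.1 hst, hp.2.2⟩
  have hcle : ∀ q ∈ Γ, ∀ t : ℤ, t < q.1 → c t ≤ (d - q.2).toNat := by
    intro q hq t ht
    simp only [hc]
    apply Finset.sup_le
    intro p hp
    rw [Finset.mem_filter] at hp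
    have hpΓ := (hGmem p).1 hp.1
    have hle : ¬ (p.2 < q.2) := fun h => hincomp p hpΓ q hq ⟨lt_of_le_of_lt hp.2.1 ht, h⟩
    exact Int.toNat_le_toNat (by omega)
  have hcge : ∀ p ∈ Γ, p.1 < n → (d - p.2).toNat ≤ c p.1 := by
    intro p hp hpn
    simp only [hc]
    apply Finset.le_sup (f := fun p : ℤ × ℤ => ((d:ℤ) - p.2).toNat)
    rw [Finset.mem_filter]
    exact ⟨(hGmem p).2 hp, le_refl _, hpn⟩
  have hcd : ∀ t, c t ≤ d := by
    intro t
    simp only [hc]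
    apply Finset.sup_le
    intro p hp
    rw [Finset.mem_filter] at hp
    obtain ⟨hb1, hb2, hb3, hb4⟩ := hΓ ((hGmem p).1 hp.1)
    omega
  have hci : c (i-1) = 0 := by
    have h0 : (G.filter (fun p => p.1 ≤ i - 1 ∧ p.1 < n)) = ∅ := by
      rw [Finset.filter_eq_empty_iff]
      intro p hp
      obtain ⟨hb1, hb2, hb3, hb4⟩ := hΓ ((hGmem p).1 hp)
      push_neg
      intro h
      omega
    simp only [hc, h0, Finset.sup_empty]
    rfl
  set I : Multiset ℤ :=
    (Finset.Icc i (n-1)).val.bind (fun t => Multiset.replicate (c t - c (t-1)) t) with hI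
  have hsum : ∀ m : ℤ, i - 1 ≤ m →
      (∑ t ∈ Finset.Icc i m, (c t - c (t-1))) = c m := by
    refine Int.le_induction ?_ ?_
    · rw [show Finset.Icc i (i-1) = ∅ by rw [Finset.Icc_eq_empty_iff]; omega]
      simp [hci]
    · intro m hm ih
      have hins : Finset.Icc i (m+1) = insert (m+1) (Finset.Icc i m) := by
        ext t
        simp only [Finset.mem_Icc, Finset.mem_insert]
        omega
      rw [hins, Finset.sum_insert (by simp only [Finset.mem_Icc]; omega), ih]
      have h1 := hcmono m (m+1) (by omega)
      have h2 : m + 1 - 1 = m := by ring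
      rw [h2]
      omega
  have hcount : ∀ s : ℤ, i ≤ s →
      Multiset.card (I.filter (fun x => x ≤ s)) = c (min s (n-1)) := by
    intro s hs
    rw [hI, my_filter_bind, Multiset.card_bind]
    have h1 : (Multiset.map (Multiset.card ∘ fun t =>
          Multiset.filter (fun x => x ≤ s) (Multiset.replicate (c t - c (t - 1)) t))
          (Finset.Icc i (n - 1)).val).sum
        = ∑ t ∈ Finset.Icc i (n-1),
            Multiset.card (Multiset.filter (fun x => x ≤ s)
              (Multiset.replicate (c t - c (t - 1)) t)) :=
      Finset.sum_map_val _ _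
    rw [h1]
    have h2 : ∀ t ∈ Finset.Icc i (n-1),
        Multiset.card (Multiset.filter (fun x => x ≤ s)
          (Multiset.replicate (c t - c (t - 1)) t))
        = if t ≤ s then c t - c (t-1) else 0 := by
      intro t _
      by_cases hts : t ≤ s
      · rw [if_pos hts, Multiset.filter_eq_self.mpr, Multiset.card_replicate]
        intro a ha
        rw [Multiset.eq_of_mem_replicate ha]
        exact hts
      · rw [if_neg hts, Multiset.filter_eq_nil.mpr, Multiset.card_zero]
        intro a ha
        rw [Multiset.eq_of_mem_replicate ha]
        exact hts
    rw [Finset.sum_congr rfl h2, ← Finset.sum_filter]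
    have h3 : Finset.filter (fun t => t ≤ s) (Finset.Icc i (n-1))
        = Finset.Icc i (min s (n-1)) := by
      ext t
      simp only [Finset.mem_filter, Finset.mem_Icc, le_min_iff]
      omega
    rw [h3, hsum (min s (n-1)) (by omega)]
  have hmemI : ∀ x ∈ I, i ≤ x ∧ x < n := by
    intro x hx
    rw [hI, Multiset.mem_bind] at hx
    obtain ⟨t, ht, hxt⟩ := hx
    rw [Finset.mem_val, Finset.mem_Icc] at ht
    rw [Multiset.eq_of_mem_replicate hxt]
    omega
  refine ⟨I, ?_, hmemI, ?_⟩
  · have heq : Multiset.filter (fun x => x ≤ n-1) I = I :=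
      Multiset.filter_eq_self.mpr (fun a ha => by have := hmemI a ha; omega)
    have := hcount (n-1) (by omega)
    rw [heq] at this
    rw [this, min_self]
    exact hcd _
  · intro p hp
    obtain ⟨hp1, hp2, hp3, hp4⟩ := hΓ hp
    have hcnt1 := hcount (p.1 - 1) (by omega)
    have hmin1 : min (p.1 - 1) (n-1) = p.1 - 1 := by omega
    rw [hmin1] at hcnt1
    have hub : (c (p.1 - 1) : ℤ) ≤ d - p.2 := by
      have := hcle p hp (p.1 - 1) (by omega)
      omega
    constructor
    · refine ⟨hp1, hp2, hp3, ?_⟩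
      rw [hcnt1]
      omega
    · rintro ⟨q, ⟨hq1, hq2, hq3, hq4⟩, hpq1, hpq2⟩
      have hpn : p.1 < n := by omega
      have hlb : (d : ℤ) - p.2 ≤ (c p.1 : ℤ) := by
        have := hcge p hp hpn
        omega
      have hcnt2 := hcount (q.1 - 1) (by omega)
      rw [hcnt2] at hq4
      have hmono : c p.1 ≤ c (min (q.1 - 1) (n-1)) := hcmono _ _ (by omega)
      omega
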